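/- Let q ∈ (0,1), 0 = e_1 ≤ … ≤ e_W with e_W > 0, U ∈ (0, e_W), and β such that 1 + (q−1)β(e_i − U) > 0 for all i and ∑_i exp_{2−q}(−β(e_i−U)) e_i = U ∑_i exp_{2−q}(−β(e_i−U)). Define g_{q,1}(β,U) = ∑_{i=1}^W exp_{2−q}(−β(e_i−U))^q. Then the partial derivative of g_{q,1} with respect to U at (β,U) equals qβ · g_{q,1}(β,U), i.e., ∂g_{q,1}/∂U (β,U) = qβ ∑_{i=1}^W exp_{2−q}(−β(e_i−U)) = qβ g_{q,1}(β,U). -/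

import Mathlib

open Finset

/-- The q-exponential `exp_r(z) = [1 + (1−r)z]_+^{1/(1−r)}`. -/
noncomputable def qexp (r z : ℝ) : ℝ := (max 0 (1 + (1 - r) * z)) ^ ((1 : ℝ) / (1 - r))

theorem deriv_g_linear_case (W : ℕ) (hW : 2 ≤ W)
    (q : ℝ) (hq0 : 0 < q) (hq1 : q < 1)
    (e : Fin W → ℝ) (he : Monotone e) (he0 : e ⟨0, by omega⟩ = 0)
    (heW : 0 < e ⟨W - 1, by omega⟩)
    (U : ℝ) (hU0 : 0 < U) (hUW : U < e ⟨W - 1, by omega⟩)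
    (β : ℝ)
    (hpos : ∀ i, 0 < 1 + (1 - q) * β * (e i - U))
    (hnorm : ∑ i, qexp (2 - q) (-(β * (e i - U))) * e i =
      U * ∑ i, qexp (2 - q) (-(β * (e i - U)))) :
    HasDerivAt (fun u : ℝ => ∑ i, qexp (2 - q) (-(β * (e i - u))) ^ q)
      (q * β * ∑ i, qexp (2 - q) (-(β * (e i - U)))) U ∧
    q * β * ∑ i, qexp (2 - q) (-(β * (e i - U))) =
      q * β * ∑ i, qexp (2 - q) (-(β * (e i - U))) ^ q := by
  have hq1' : q - 1 ≠ 0 := by linarith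
  set c : ℝ := 1 / (q - 1) with hc
  have harg : ∀ i : Fin W, ∀ u : ℝ,
      1 + (1 - (2 - q)) * (-(β * (e i - u))) = 1 + (1 - q) * β * (e i - u) := by
    intro i u; ring
  have key : ∀ i : Fin W, ∀ u : ℝ, 0 < 1 + (1 - q) * β * (e i - u) →
      qexp (2 - q) (-(β * (e i - u))) = (1 + (1 - q) * β * (e i - u)) ^ c := by
    intro i u hu
    have h2 : (1:ℝ) - (2 - q) = q - 1 := by ring
    rw [qexp, harg i u, max_eq_right hu.le, h2, hc, one_div]
  have hcq : c * q = q / (q - 1) := by rw [hc]; field_simp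
  have key2 : ∀ i : Fin W, ∀ u : ℝ, 0 < 1 + (1 - q) * β * (e i - u) →
      qexp (2 - q) (-(β * (e i - u))) ^ q
        = (1 + (1 - q) * β * (e i - u)) ^ (q / (q - 1)) := by
    intro i u hu
    rw [key i u hu, ← Real.rpow_mul hu.le, hcq]
  -- derivative of each summand
  have hderiv : ∀ i : Fin W, HasDerivAt
      (fun u => qexp (2 - q) (-(β * (e i - u))) ^ q)
      (q * β * qexp (2 - q) (-(β * (e i - U)))) U := by
    intro i
    have hA : HasDerivAt (fun u : ℝ => 1 + (1 - q) * β * (e i - u))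
        (-((1 - q) * β)) U := by
      have h1 : HasDerivAt (fun u : ℝ => e i - u) (-1) U :=
        (hasDerivAt_id U).const_sub (e i)
      have h2 := (h1.const_mul ((1 - q) * β)).const_add 1
      exact h2.congr_deriv (by ring)
    have hg : HasDerivAt
        (fun u : ℝ => (1 + (1 - q) * β * (e i - u)) ^ (q / (q - 1)))
        (q * β * qexp (2 - q) (-(β * (e i - U)))) U := by
      have := hA.rpow_const (p := q / (q - 1)) (Or.inl (ne_of_gt (hpos i)))
      convert this using 1
      rw [key i U (hpos i)]
      have hexp : q / (q - 1) - 1 = c := by rw [hc]; field_simp; ring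
      rw [hexp]
      field_simp
      ring
    refine hg.congr_of_eventuallyEq ?_
    have hopen : IsOpen {u : ℝ | 0 < 1 + (1 - q) * β * (e i - u)} := by
      have hcont : Continuous fun u : ℝ => 1 + (1 - q) * β * (e i - u) := by
        continuity
      exact isOpen_lt continuous_const hcont
    filter_upwards [hopen.mem_nhds (hpos i)] with u hu
    exact key2 i u hu
  have hsum : HasDerivAt (fun u : ℝ => ∑ i, qexp (2 - q) (-(β * (e i - u))) ^ q)
      (∑ i, q * β * qexp (2 - q) (-(β * (e i - U)))) U :=
    HasDerivAt.fun_sum fun i _ => hderiv i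
  rw [← Finset.mul_sum] at hsum
  -- the identity ∑ qexp = ∑ qexp^q
  have hid : ∀ i : Fin W, qexp (2 - q) (-(β * (e i - U))) ^ q
      = qexp (2 - q) (-(β * (e i - U)))
        + (1 - q) * β * (qexp (2 - q) (-(β * (e i - U))) * e i)
        - (1 - q) * β * U * qexp (2 - q) (-(β * (e i - U))) := by
    intro i
    have hu := hpos i
    have h1 : qexp (2 - q) (-(β * (e i - U))) ^ q
        = qexp (2 - q) (-(β * (e i - U))) * (1 + (1 - q) * β * (e i - U)) := by
      rw [key2 i U hu, key i U hu, ← Real.rpow_add_one (ne_of_gt hu)]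
      congr 1
      rw [hc]; field_simp; ring
    rw [h1]; ring
  have hsum2 : ∑ i, qexp (2 - q) (-(β * (e i - U))) ^ q
      = ∑ i, qexp (2 - q) (-(β * (e i - U))) := by
    simp only [hid, Finset.sum_sub_distrib, Finset.sum_add_distrib, ← Finset.mul_sum]
    rw [hnorm]; ring
  constructor
  · exact hsum
  · rw [hsum2]
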